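/- Let n be even and suppose Signgiver has a strategy in the prefix-discrepancy game on [n] guaranteeing that at every time t and for every pair 1 ≤ i ≤ j ≤ n, |Σ_{h=i}^{j} x_h^t| − unq^t(i,j)/2 ≤ D′, where unq^t(i,j) is the number of coordinates in [i,j] still equal to 0 at time t (so the modified game value satisfies d′(n) ≤ D′). Then for d = D′ + 3 the function Disc-max-d satisfies E_{n/2}(Disc-max-d) ≤ 6d; that is, its deterministic query complexity is at least n − 6(D′ + 3). -/

import Mathlib

/-- A (binary) decision tree over ground set `[n]` (positions `Fin n`):
leaves are labelled with a Boolean output, inner nodes with a query `i ∈ [n]`;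
the left subtree corresponds to the answer `i ∉ A`, the right one to `i ∈ A`. -/
inductive DecTree (n : ℕ) : Type
  | leaf : Bool → DecTree n
  | node : Fin n → DecTree n → DecTree n → DecTree n

namespace DecTree

/-- The height (depth) of a decision tree: the maximum number of queries on a
root-to-leaf path. -/
def depth {n : ℕ} : DecTree n → ℕ
  | leaf _ => 0
  | node _ t0 t1 => max (depth t0) (depth t1) + 1

/-- Evaluate a decision tree on an input set `A ⊆ [n]`. -/
def eval {n : ℕ} : DecTree n → Finset (Fin n) → Bool
  | leaf b, _ => b
  | node i t0 t1, A => if i ∈ A then eval t1 A else eval t0 A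

end DecTree

/-- The slice: the `k`-element subsets of `[n]`. -/
def Slice (n k : ℕ) : Type := {A : Finset (Fin n) // A.card = k}

/-- A decision tree computes `f` on the slice if it evaluates to `f A` for every
`A` in the slice. -/
def Computes {n k : ℕ} (T : DecTree n) (f : Slice n k → Bool) : Prop :=
  ∀ A : Slice n k, T.eval A.val = f A

/-- Deterministic query complexity of `f` on the slice: the minimum height of a
decision tree computing `f`. -/
noncomputable def Dquery (n k : ℕ) (f : Slice n k → Bool) : ℕ :=
  sInf {d : ℕ | ∃ T : DecTree n, T.depth ≤ d ∧ Computes T f}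

/-- `Dmax n k`: the maximum deterministic query complexity over all Boolean
functions on the slice of `k`-subsets of `[n]`. -/
noncomputable def Dmax (n k : ℕ) : ℕ :=
  sSup {d : ℕ | ∃ f : Slice n k → Bool, Dquery n k f = d}

/-- `Equery n k = n - Dmax n k`. -/
noncomputable def Equery (n k : ℕ) : ℕ := n - Dmax n k


/-- A Signgiver strategy in the prefix-discrepancy game on `[n]` (positions
`Fin n`): given the history of play (a list of (position, sign) pairs, most
recent first) and the position just queried by Positioner, it returns a sign. -/
def SgStrategy (n : ℕ) : Type := List (Fin n × ℤ) → Fin n → ℤ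

/-- A valid strategy always answers `+1` or `-1`. -/
def ValidStrategy {n : ℕ} (σ : SgStrategy n) : Prop :=
  ∀ h i, σ h i = 1 ∨ σ h i = -1

/-- The history of play produced by the strategy `σ` against the (chronological,
most recent first) list `qs` of positions queried by Positioner. -/
def playHist {n : ℕ} (σ : SgStrategy n) : List (Fin n) → List (Fin n × ℤ)
  | [] => []
  | q :: qs => (q, σ (playHist σ qs) q) :: playHist σ qs

/-- The value of the board at position `i` given the history `h`: the assigned
sign if `i` has been queried, and `0` otherwise. -/
def boardVal {n : ℕ} (h : List (Fin n × ℤ)) (i : Fin n) : ℤ :=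
  ((h.find? fun p => decide (p.1 = i)).map Prod.snd).getD 0

/-- The signed discrepancy `disc(j) = Σ_{i=1}^{j} x_i` of the prefix `[1,j]`
(positions of index `< j` in the 0-indexed board). -/
def prefixDisc {n : ℕ} (h : List (Fin n × ℤ)) (j : ℕ) : ℤ :=
  ∑ p ∈ Finset.univ.filter (fun p : Fin n => (p : ℕ) < j), boardVal h p

/-- The defining property of `Disc-max-d` for a subset `A ⊆ [n]`:
`| |A ∩ [j]| - j/2 | ≤ d/2` (written `|2·|A ∩ [j]| - j| ≤ d`) for all
`1 ≤ j ≤ n`, where `A ∩ [j]` consists of the elements of `A` of index `< j`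
in the 0-indexed ground set `Fin n`. -/
def DiscMaxProp (n d : ℕ) (A : Finset (Fin n)) : Prop :=
  ∀ j ∈ Finset.Icc 1 n,
    |2 * ((A.filter fun i : Fin n => (i : ℕ) < j).card : ℤ) - (j : ℤ)| ≤ (d : ℤ)

instance (n d : ℕ) (A : Finset (Fin n)) : Decidable (DiscMaxProp n d A) := by
  unfold DiscMaxProp; infer_instance

/-- The Boolean function `Disc-max-d` on subsets `A ⊆ [n]`. -/
def discMaxFun (n d : ℕ) (A : Finset (Fin n)) : Bool := decide (DiscMaxProp n d A)

/-- The signed discrepancy `disc(i,j) = Σ_{h=i}^{j} x_h` of the (0-indexed)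
interval `[i,j]` of the board given by the history `h`. -/
def intervalDisc {n : ℕ} (h : List (Fin n × ℤ)) (i j : ℕ) : ℤ :=
  ∑ p ∈ Finset.univ.filter (fun p : Fin n => i ≤ (p : ℕ) ∧ (p : ℕ) ≤ j), boardVal h p

/-- The number `unq(i,j)` of unqueried (value-0) positions of the board in the
(0-indexed) interval `[i,j]`. -/
def intervalUnq {n : ℕ} (h : List (Fin n × ℤ)) (i j : ℕ) : ℕ :=
  (Finset.univ.filter fun p : Fin n =>
    i ≤ (p : ℕ) ∧ (p : ℕ) ≤ j ∧ boardVal h p = 0).card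


open Finset

section Walk

variable {n : ℕ} (σ : SgStrategy n)

lemma boardVal_cons (q : Fin n) (v : ℤ) (h : List (Fin n × ℤ)) (p : Fin n) :
    boardVal ((q, v) :: h) p = if q = p then v else boardVal h p := by
  unfold boardVal
  by_cases hqp : q = p <;> simp [List.find?, hqp]

lemma boardVal_eq_zero_of_not_mem {qs : List (Fin n)} {p : Fin n} (hp : p ∉ qs) :
    boardVal (playHist σ qs) p = 0 := by
  induction qs with
  | nil => rfl
  | cons q qs ih =>
    simp only [List.mem_cons, not_or] at hp
    rw [playHist, boardVal_cons, if_neg (fun hh => hp.1 hh.symm)]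
    exact ih hp.2

variable (hσ : ValidStrategy σ)
include hσ

lemma boardVal_tri (qs : List (Fin n)) (p : Fin n) :
    boardVal (playHist σ qs) p = 0 ∨ boardVal (playHist σ qs) p = 1 ∨
      boardVal (playHist σ qs) p = -1 := by
  induction qs with
  | nil => left; rfl
  | cons q qs ih =>
    rw [playHist, boardVal_cons]
    by_cases hqp : q = p
    · rw [if_pos hqp]
      rcases hσ (playHist σ qs) q with h1 | h1 <;> rw [h1] <;> tauto
    · rw [if_neg hqp]; exact ih

lemma boardVal_ne_zero_of_mem {qs : List (Fin n)} {p : Fin n} (hp : p ∈ qs) :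
    boardVal (playHist σ qs) p ≠ 0 := by
  induction qs with
  | nil => simp at hp
  | cons q qs ih =>
    rw [playHist, boardVal_cons]
    by_cases hqp : q = p
    · rw [if_pos hqp]
      rcases hσ (playHist σ qs) q with h1 | h1 <;> rw [h1] <;> decide
    · rw [if_neg hqp]
      rcases List.mem_cons.mp hp with h | h
      · exact absurd h.symm hqp
      · exact ih h

/-- persistence of assigned values under extension of the query list -/
lemma boardVal_persist {qs qs' : List (Fin n)} (hsuf : qs <:+ qs') (hnd : qs'.Nodup)
    {p : Fin n} (hp : p ∈ qs) :
    boardVal (playHist σ qs') p = boardVal (playHist σ qs) p := by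
  obtain ⟨l, rfl⟩ := hsuf
  induction l with
  | nil => rfl
  | cons q l ih =>
    have hnd' : (l ++ qs).Nodup := (List.nodup_cons.mp hnd).2
    have hq : q ∉ l ++ qs := (List.nodup_cons.mp hnd).1
    rw [List.cons_append, playHist, boardVal_cons, if_neg, ih hnd']
    intro hqp
    exact hq (by rw [hqp]; exact List.mem_append_right _ hp)

end Walk

section Walk2

variable {n : ℕ} (σ : SgStrategy n)

/-- Walk down the tree, answering queries with σ; returns final query list and leaf bit. -/
def walk : DecTree n → List (Fin n) → List (Fin n) × Bool
  | DecTree.leaf b, qs => (qs, b)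
  | DecTree.node i t0 t1, qs =>
    if boardVal (playHist σ qs) i = 0 then
      if σ (playHist σ qs) i = 1 then walk t1 (i :: qs) else walk t0 (i :: qs)
    else if boardVal (playHist σ qs) i = 1 then walk t1 qs else walk t0 qs

lemma walk_suffix (T : DecTree n) (qs : List (Fin n)) : qs <:+ (walk σ T qs).1 := by
  induction T generalizing qs with
  | leaf b => exact List.suffix_refl _
  | node i t0 t1 ih0 ih1 =>
    rw [walk]
    split_ifs with h1 h2 h3
    · exact (List.suffix_cons i qs).trans (ih1 _)
    · exact (List.suffix_cons i qs).trans (ih0 _)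
    · exact ih1 _
    · exact ih0 _

lemma walk_length (T : DecTree n) (qs : List (Fin n)) :
    (walk σ T qs).1.length ≤ T.depth + qs.length := by
  induction T generalizing qs with
  | leaf b => simp [walk, DecTree.depth]
  | node i t0 t1 ih0 ih1 =>
    rw [walk, DecTree.depth]
    split_ifs with h1 h2 h3
    · calc (walk σ t1 (i :: qs)).1.length ≤ t1.depth + (i :: qs).length := ih1 _
        _ ≤ _ := by simp; omega
    · calc (walk σ t0 (i :: qs)).1.length ≤ t0.depth + (i :: qs).length := ih0 _
        _ ≤ _ := by simp; omega
    · exact (ih1 _).trans (by omega)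
    · exact (ih0 _).trans (by omega)

lemma walk_nodup (hσ : ValidStrategy σ) (T : DecTree n) (qs : List (Fin n)) (hnd : qs.Nodup) :
    (walk σ T qs).1.Nodup := by
  induction T generalizing qs with
  | leaf b => exact hnd
  | node i t0 t1 ih0 ih1 =>
    rw [walk]
    split_ifs with h1 h2 h3
    · exact ih1 _ (List.nodup_cons.mpr ⟨fun hm => boardVal_ne_zero_of_mem σ hσ hm h1, hnd⟩)
    · exact ih0 _ (List.nodup_cons.mpr ⟨fun hm => boardVal_ne_zero_of_mem σ hσ hm h1, hnd⟩)
    · exact ih1 _ hnd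
    · exact ih0 _ hnd

lemma walk_eval (hσ : ValidStrategy σ) (T : DecTree n) (qs : List (Fin n)) (hnd : qs.Nodup)
    (A : Finset (Fin n))
    (hpos : ∀ p, boardVal (playHist σ (walk σ T qs).1) p = 1 → p ∈ A)
    (hneg : ∀ p, boardVal (playHist σ (walk σ T qs).1) p = -1 → p ∉ A) :
    T.eval A = (walk σ T qs).2 := by
  induction T generalizing qs with
  | leaf b => rfl
  | node i t0 t1 ih0 ih1 =>
    have hrw : walk σ (DecTree.node i t0 t1) qs =
      if boardVal (playHist σ qs) i = 0 then
        if σ (playHist σ qs) i = 1 then walk σ t1 (i :: qs) else walk σ t0 (i :: qs)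
      else if boardVal (playHist σ qs) i = 1 then walk σ t1 qs else walk σ t0 qs := rfl
    by_cases h1 : boardVal (playHist σ qs) i = 0
    · have hnd' : (i :: qs).Nodup :=
        List.nodup_cons.mpr ⟨fun hm => boardVal_ne_zero_of_mem σ hσ hm h1, hnd⟩
      by_cases h2 : σ (playHist σ qs) i = 1
      · rw [hrw, if_pos h1, if_pos h2] at hpos hneg ⊢
        have hbi : boardVal (playHist σ (i :: qs)) i = 1 := by
          rw [playHist, boardVal_cons, if_pos rfl]; exact h2
        have hfin : boardVal (playHist σ (walk σ t1 (i :: qs)).1) i = 1 := by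
          rw [boardVal_persist σ hσ (walk_suffix σ t1 (i :: qs))
            (walk_nodup σ hσ t1 (i :: qs) hnd') List.mem_cons_self]
          exact hbi
        have hiA : i ∈ A := hpos i hfin
        rw [DecTree.eval, if_pos hiA]
        exact ih1 _ hnd' hpos hneg
      · have h2' : σ (playHist σ qs) i = -1 := (hσ (playHist σ qs) i).resolve_left h2
        rw [hrw, if_pos h1, if_neg h2] at hpos hneg ⊢
        have hbi : boardVal (playHist σ (i :: qs)) i = -1 := by
          rw [playHist, boardVal_cons, if_pos rfl]; exact h2'
        have hfin : boardVal (playHist σ (walk σ t0 (i :: qs)).1) i = -1 := by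
          rw [boardVal_persist σ hσ (walk_suffix σ t0 (i :: qs))
            (walk_nodup σ hσ t0 (i :: qs) hnd') List.mem_cons_self]
          exact hbi
        have hiA : i ∉ A := hneg i hfin
        rw [DecTree.eval, if_neg hiA]
        exact ih0 _ hnd' hpos hneg
    · have hmem : i ∈ qs := by
        by_contra hm
        exact h1 (boardVal_eq_zero_of_not_mem σ hm)
      by_cases h2 : boardVal (playHist σ qs) i = 1
      · rw [hrw, if_neg h1, if_pos h2] at hpos hneg ⊢
        have hfin : boardVal (playHist σ (walk σ t1 qs).1) i = 1 := by
          rw [boardVal_persist σ hσ (walk_suffix σ t1 qs) (walk_nodup σ hσ t1 qs hnd) hmem]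
          exact h2
        rw [DecTree.eval, if_pos (hpos i hfin)]
        exact ih1 _ hnd hpos hneg
      · have h2' : boardVal (playHist σ qs) i = -1 :=
          ((boardVal_tri σ hσ qs i).resolve_left h1).resolve_left h2
        rw [hrw, if_neg h1, if_neg h2] at hpos hneg ⊢
        have hfin : boardVal (playHist σ (walk σ t0 qs).1) i = -1 := by
          rw [boardVal_persist σ hσ (walk_suffix σ t0 qs) (walk_nodup σ hσ t0 qs hnd) hmem]
          exact h2'
        rw [DecTree.eval, if_neg (hneg i hfin)]
        exact ih0 _ hnd hpos hneg

end Walk2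

section Split

variable {n : ℕ}

lemma filter_val_lt_succ (s : Finset (Fin n)) (j : ℕ) (hj : j < n) :
    (s.filter fun p : Fin n => (p : ℕ) < j + 1) =
      (s.filter fun p : Fin n => (p : ℕ) < j) ∪ (s.filter fun p : Fin n => p = ⟨j, hj⟩) := by
  ext p
  simp only [mem_filter, mem_union]
  constructor
  · rintro ⟨hp, hlt⟩
    rcases Nat.lt_succ_iff_lt_or_eq.mp hlt with hc | hc
    exacts [Or.inl ⟨hp, hc⟩, Or.inr ⟨hp, Fin.ext hc⟩]
  · rintro (⟨hp, hlt⟩ | ⟨hp, rfl⟩)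
    exacts [⟨hp, Nat.lt_succ_of_lt hlt⟩, ⟨hp, Nat.lt_succ_self j⟩]

lemma disj_lt_eq (s : Finset (Fin n)) (j : ℕ) (hj : j < n) :
    Disjoint (s.filter fun p : Fin n => (p : ℕ) < j) (s.filter fun p : Fin n => p = ⟨j, hj⟩) := by
  rw [Finset.disjoint_left]
  rintro p hp hq
  simp only [mem_filter] at hp hq
  rcases hq with ⟨-, rfl⟩
  simp at hp

lemma card_lt_succ (s : Finset (Fin n)) (j : ℕ) (hj : j < n) :
    (s.filter fun p : Fin n => (p : ℕ) < j + 1).card =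
      (s.filter fun p : Fin n => (p : ℕ) < j).card + if (⟨j, hj⟩ : Fin n) ∈ s then 1 else 0 := by
  rw [filter_val_lt_succ s j hj, Finset.card_union_of_disjoint (disj_lt_eq s j hj),
    Finset.filter_eq']
  split_ifs <;> simp

lemma sum_lt_succ (g : Fin n → ℤ) (j : ℕ) (hj : j < n) :
    ∑ p ∈ Finset.univ.filter (fun p : Fin n => (p : ℕ) < j + 1), g p =
      (∑ p ∈ Finset.univ.filter (fun p : Fin n => (p : ℕ) < j), g p) + g ⟨j, hj⟩ := by
  rw [filter_val_lt_succ _ j hj, Finset.sum_union (disj_lt_eq _ j hj),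
    Finset.filter_eq', if_pos (Finset.mem_univ _), Finset.sum_singleton]

lemma filter_lt_split (s : Finset (Fin n)) (a b : ℕ) (hab : a ≤ b) :
    (s.filter fun p : Fin n => (p : ℕ) < b) =
      (s.filter fun p : Fin n => (p : ℕ) < a) ∪ (s.filter fun p : Fin n => a ≤ (p : ℕ) ∧ (p : ℕ) < b) := by
  ext p
  simp only [mem_filter, mem_union]
  constructor
  · rintro ⟨hp, hlt⟩
    rcases lt_or_ge (p : ℕ) a with hc | hc
    exacts [Or.inl ⟨hp, hc⟩, Or.inr ⟨hp, hc, hlt⟩]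
  · rintro (⟨hp, hlt⟩ | ⟨hp, -, hlt⟩)
    exacts [⟨hp, lt_of_lt_of_le hlt hab⟩, ⟨hp, hlt⟩]

lemma disj_lt_split (s : Finset (Fin n)) (a b : ℕ) :
    Disjoint (s.filter fun p : Fin n => (p : ℕ) < a)
      (s.filter fun p : Fin n => a ≤ (p : ℕ) ∧ (p : ℕ) < b) := by
  rw [Finset.disjoint_left]
  rintro p hp hq
  simp only [mem_filter] at hp hq
  omega

lemma card_lt_split (s : Finset (Fin n)) (a b : ℕ) (hab : a ≤ b) :
    (s.filter fun p : Fin n => (p : ℕ) < b).card =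
      (s.filter fun p : Fin n => (p : ℕ) < a).card +
        (s.filter fun p : Fin n => a ≤ (p : ℕ) ∧ (p : ℕ) < b).card := by
  rw [filter_lt_split s a b hab, Finset.card_union_of_disjoint (disj_lt_split s a b)]

lemma sum_lt_split (g : Fin n → ℤ) (a b : ℕ) (hab : a ≤ b) :
    ∑ p ∈ Finset.univ.filter (fun p : Fin n => (p : ℕ) < b), g p =
      (∑ p ∈ Finset.univ.filter (fun p : Fin n => (p : ℕ) < a), g p) +
        ∑ p ∈ Finset.univ.filter (fun p : Fin n => a ≤ (p : ℕ) ∧ (p : ℕ) < b), g p := by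
  rw [filter_lt_split _ a b hab, Finset.sum_union (disj_lt_split _ a b)]

end Split

section Hist

variable {n : ℕ} (h : List (Fin n × ℤ))

/-- number of unqueried positions below `j` -/
def UU (j : ℕ) : ℕ :=
  ((Finset.univ.filter fun p : Fin n => boardVal h p = 0).filter fun p : Fin n => (p : ℕ) < j).card

lemma UU_zero : UU h 0 = 0 := by simp [UU]

lemma prefixDisc_zero : prefixDisc h 0 = 0 := by simp [prefixDisc]

lemma UU_mono {a b : ℕ} (hab : a ≤ b) : UU h a ≤ UU h b := by
  apply Finset.card_le_card
  intro p hp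
  simp only [Finset.mem_filter] at hp ⊢
  exact ⟨hp.1, by omega⟩

lemma UU_succ (j : ℕ) (hj : j < n) :
    UU h (j + 1) = UU h j + if boardVal h ⟨j, hj⟩ = 0 then 1 else 0 := by
  unfold UU
  rw [card_lt_succ _ j hj]
  congr 1
  by_cases hb : boardVal h ⟨j, hj⟩ = 0 <;> simp [hb]

lemma prefixDisc_succ (j : ℕ) (hj : j < n) :
    prefixDisc h (j + 1) = prefixDisc h j + boardVal h ⟨j, hj⟩ := by
  unfold prefixDisc
  exact sum_lt_succ _ j hj

/-- conversion of the interval hypothesis into prefix form -/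
lemma H1conv (D' : ℕ)
    (H : ∀ i j : ℕ, i ≤ j → j < n →
      2 * |intervalDisc h i j| - (intervalUnq h i j : ℤ) ≤ 2 * (D' : ℤ)) :
    ∀ a b : ℕ, a ≤ b → b ≤ n →
      2 * |prefixDisc h b - prefixDisc h a| ≤ ((UU h b : ℤ) - UU h a) + 2 * D' := by
  intro a b hab hbn
  rcases eq_or_lt_of_le hab with rfl | hlt
  · simp only [sub_self, abs_zero, mul_zero]
    have := UU_mono h (le_refl a)
    omega
  · have hb1 : b - 1 < n := by omega
    have hd : intervalDisc h a (b - 1) = prefixDisc h b - prefixDisc h a := by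
      have hs := sum_lt_split (boardVal h) a b hab
      have : intervalDisc h a (b - 1) =
          ∑ p ∈ Finset.univ.filter (fun p : Fin n => a ≤ (p : ℕ) ∧ (p : ℕ) < b),
            boardVal h p := by
        unfold intervalDisc
        apply Finset.sum_congr _ (fun _ _ => rfl)
        apply Finset.filter_congr
        intro p _
        constructor <;> intro hp <;> constructor <;> omega
      rw [this]
      unfold prefixDisc
      omega
    have hu : (intervalUnq h a (b - 1) : ℤ) = (UU h b : ℤ) - UU h a := by
      have hs := card_lt_split (Finset.univ.filter fun p : Fin n => boardVal h p = 0) a b hab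
      have : intervalUnq h a (b - 1) =
          ((Finset.univ.filter fun p : Fin n => boardVal h p = 0).filter
            fun p : Fin n => a ≤ (p : ℕ) ∧ (p : ℕ) < b).card := by
        unfold intervalUnq
        congr 1
        rw [Finset.filter_filter]
        apply Finset.filter_congr
        intro p _
        constructor
        · rintro ⟨h1, h2, h3⟩; exact ⟨h3, h1, by omega⟩
        · rintro ⟨h3, h1, h2⟩; exact ⟨h1, by omega, h3⟩
      unfold UU
      rw [this]
      push_cast
      omega
    have := H a (b - 1) (by omega) hb1
    rw [hd, hu] at this
    omega

end Hist

section Key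

variable {n : ℕ} (h : List (Fin n × ℤ))

/-- the completion set determined by the walk `T` -/
def AofT (T : ℕ → ℤ) : Finset (Fin n) :=
  Finset.univ.filter fun p =>
    boardVal h p = 1 ∨ (boardVal h p = 0 ∧ T (UU h (p : ℕ) + 1) = T (UU h (p : ℕ)) + 1)

lemma key (htri : ∀ p, boardVal h p = 0 ∨ boardVal h p = 1 ∨ boardVal h p = -1)
    (T : ℕ → ℤ) (hT0 : T 0 = 0)
    (hstep : ∀ k, T (k + 1) = T k + 1 ∨ T (k + 1) = T k - 1) :
    ∀ j, j ≤ n →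
      2 * (((AofT h T).filter fun p : Fin n => (p : ℕ) < j).card : ℤ) =
        j + prefixDisc h j + T (UU h j) := by
  intro j
  induction j with
  | zero => intro _; simp [UU_zero, prefixDisc_zero, hT0]
  | succ j ih =>
    intro hj1
    have hj : j < n := by omega
    have hc := card_lt_succ (AofT h T) j hj
    have hU := UU_succ h j hj
    have hF := prefixDisc_succ h j hj
    have hmem : ((⟨j, hj⟩ : Fin n) ∈ AofT h T) ↔
        (boardVal h ⟨j, hj⟩ = 1 ∨
          (boardVal h ⟨j, hj⟩ = 0 ∧ T (UU h j + 1) = T (UU h j) + 1)) := by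
      simp [AofT]
    have ihj := ih (by omega)
    rcases htri ⟨j, hj⟩ with hb | hb | hb
    · rw [if_pos hb] at hU
      rcases hstep (UU h j) with hs | hs
      · have hm : (⟨j, hj⟩ : Fin n) ∈ AofT h T := hmem.mpr (Or.inr ⟨hb, hs⟩)
        rw [if_pos hm] at hc
        rw [hF, hU, hb, hc, hs]
        push_cast
        omega
      · have hm : (⟨j, hj⟩ : Fin n) ∉ AofT h T := by
          rw [hmem]
          rintro (h1 | ⟨-, h2⟩)
          · rw [hb] at h1; exact absurd h1 (by decide)
          · omega
        rw [if_neg hm] at hc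
        rw [hF, hU, hb, hc, hs]
        push_cast
        omega
    · rw [if_neg (by rw [hb]; decide), Nat.add_zero] at hU
      have hm : (⟨j, hj⟩ : Fin n) ∈ AofT h T := hmem.mpr (Or.inl hb)
      rw [if_pos hm] at hc
      rw [hF, hU, hb, hc]
      simp only [Nat.add_zero]
      push_cast
      omega
    · rw [if_neg (by rw [hb]; decide), Nat.add_zero] at hU
      have hm : (⟨j, hj⟩ : Fin n) ∉ AofT h T := by
        rw [hmem]
        rintro (h1 | ⟨h2, -⟩)
        · rw [hb] at h1; exact absurd h1 (by decide)
        · rw [hb] at h2; exact absurd h2 (by decide)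
      rw [if_neg hm] at hc
      rw [hF, hU, hb, hc]
      simp only [Nat.add_zero]
      push_cast
      omega

lemma filter_lt_n_eq (s : Finset (Fin n)) : (s.filter fun p : Fin n => (p : ℕ) < n) = s :=
  Finset.filter_true_of_mem fun p _ => p.isLt

lemma parity_un (htri : ∀ p, boardVal h p = 0 ∨ boardVal h p = 1 ∨ boardVal h p = -1)
    (hn : Even n) : Even ((UU h n : ℤ) + prefixDisc h n) := by
  have h1 : (UU h n : ℤ) = ∑ p : Fin n, (if boardVal h p = 0 then (1 : ℤ) else 0) := by
    unfold UU
    rw [filter_lt_n_eq, Finset.card_filter]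
    push_cast
    exact Finset.sum_congr rfl fun p _ => by split_ifs <;> simp
  have h2 : prefixDisc h n = ∑ p : Fin n, boardVal h p := by
    unfold prefixDisc
    rw [filter_lt_n_eq]
  rw [h1, h2, ← Finset.sum_add_distrib]
  have h3 : ∀ p : Fin n,
      (if boardVal h p = 0 then (1 : ℤ) else 0) + boardVal h p + 1 =
        2 * (if boardVal h p = 0 then 1 else if boardVal h p = 1 then 1 else 0) := by
    intro p
    rcases htri p with hb | hb | hb <;> rw [hb] <;> norm_num
  have h4 : Even (∑ p : Fin n,
      ((if boardVal h p = 0 then (1 : ℤ) else 0) + boardVal h p + 1)) := by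
    apply Finset.even_sum
    intro p _
    exact ⟨_, by rw [h3 p]; ring⟩
  rw [Finset.sum_add_distrib, Finset.sum_const] at h4
  simp only [Finset.card_univ, Fintype.card_fin, smul_eq_mul, nsmul_eq_mul, mul_one] at h4
  obtain ⟨m, hm⟩ := h4
  obtain ⟨m', hm'⟩ := hn
  exact ⟨m - m', by push_cast at hm ⊢; omega⟩

lemma UU_surj : ∀ j ≤ n, ∀ k ≤ UU h j, ∃ j' ≤ j, UU h j' = k := by
  intro j
  induction j with
  | zero =>
    intro _ k hk
    rw [UU_zero] at hk
    exact ⟨0, le_refl _, by rw [UU_zero]; omega⟩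
  | succ j ihj =>
    intro hjn k hk
    have hj : j < n := by omega
    have hU := UU_succ h j hj
    rcases le_or_gt k (UU h j) with hk2 | hk2
    · obtain ⟨j', hj', he⟩ := ihj (by omega) k hk2
      exact ⟨j', by omega, he⟩
    · refine ⟨j + 1, le_refl _, ?_⟩
      by_cases hb : boardVal h ⟨j, hj⟩ = 0 <;> simp [hb] at hU <;> omega

end Key

section GoodWalk

lemma abs_shift (a b : ℤ) : |a + 1 - b| ≤ |a - b| + 1 ∧ |a - b| ≤ |a + 1 - b| + 1 := by
  constructor
  · rw [show a + 1 - b = (a - b) + 1 by ring]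
    exact (abs_add_le _ _).trans (by norm_num)
  · rw [show a - b = (a + 1 - b) + (-1) by ring]
    exact (abs_add_le _ _).trans (by norm_num)

lemma good_walk (n u D' : ℕ) (s : ℤ) (F : ℕ → ℤ) (U : ℕ → ℕ)
    (hF0 : F 0 = 0) (hU0 : U 0 = 0) (hUn : U n = u) (hFn : F n = s)
    (hUle : ∀ j, j ≤ n → U j ≤ u)
    (hu : 2 * D' ≤ u)
    (hpar : Even ((u : ℤ) + s))
    (H : ∀ a b : ℕ, a ≤ b → b ≤ n → 2 * |F b - F a| ≤ ((U b : ℤ) - U a) + 2 * D') :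
    ∃ T : ℕ → ℤ, T 0 = 0 ∧ (∀ k, T (k + 1) = T k + 1 ∨ T (k + 1) = T k - 1) ∧
      T u = -s ∧ ∀ j, j ≤ n → |F j + T (U j)| ≤ (D' : ℤ) + 1 := by
  have hFa : ∀ j, j ≤ n → 2 * |F j| ≤ (U j : ℤ) + 2 * D' := by
    intro j hj
    have := H 0 j (by omega) hj
    rw [hF0, hU0] at this
    simpa using this
  have hFb : ∀ j, j ≤ n → 2 * |s - F j| ≤ ((u : ℤ) - U j) + 2 * D' := by
    intro j hj
    have := H j n hj (le_refl n)
    rwa [hFn, hUn] at this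
  have hFc : ∀ j j', j ≤ n → j' ≤ n →
      2 * |F j - F j'| ≤ |(U j : ℤ) - U j'| + 2 * D' := by
    intro j j' hj hj'
    rcases le_total j' j with hle | hle
    · have := H j' j hle hj
      have h2 : (U j' : ℤ) - U j ≤ |(U j : ℤ) - U j'| := by
        rw [abs_sub_comm]; exact le_abs_self _
      have h3 : (U j : ℤ) - U j' ≤ |(U j : ℤ) - U j'| := le_abs_self _
      omega
    · have := H j j' hle hj'
      rw [abs_sub_comm] at this
      have h3 : (U j' : ℤ) - U j ≤ |(U j : ℤ) - U j'| := by
        rw [abs_sub_comm]; exact le_abs_self _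
      omega
  have hs2 : 2 * |s| ≤ (u : ℤ) + 2 * D' := by
    have := hFa n (le_refl n); rwa [hFn, hUn] at this
  have hsle : |s| ≤ (u : ℤ) := by omega
  have hs3 : s ≤ (u : ℤ) := (le_abs_self s).trans hsle
  have hs4 : -s ≤ (u : ℤ) := (neg_le_abs s).trans hsle
  -- the barrier function
  set M : ℕ → ℤ := fun k =>
    max (max (-(k : ℤ)) (-s - ((u : ℤ) - k)))
      ((Finset.range (n + 1)).sup' Finset.nonempty_range_add_one
        (fun j => -F j - D' - |(k : ℤ) - U j|)) with hM
  have hc1 : ∀ k : ℕ, -(k : ℤ) ≤ M k := fun k =>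
    le_trans (le_max_left _ _) (le_max_left _ _)
  have hc2 : ∀ k : ℕ, -s - ((u : ℤ) - k) ≤ M k := fun k =>
    le_trans (le_max_right _ _) (le_max_left _ _)
  have hc3 : ∀ (k : ℕ) (j : ℕ), j ≤ n → -F j - D' - |(k : ℤ) - U j| ≤ M k := by
    intro k j hj
    exact le_trans
      (Finset.le_sup' (fun j => -F j - (D' : ℤ) - |(k : ℤ) - U j|)
        (Finset.mem_range_succ_iff.mpr hj))
      (le_max_right _ _)
  have hub : ∀ (k : ℕ) (c : ℤ), -(k : ℤ) ≤ c → -s - ((u : ℤ) - k) ≤ c →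
      (∀ j, j ≤ n → -F j - D' - |(k : ℤ) - U j| ≤ c) → M k ≤ c := by
    intro k c h1 h2 h3
    refine max_le (max_le h1 h2) (Finset.sup'_le _ _ ?_)
    intro j hj
    exact h3 j (Finset.mem_range_succ_iff.mp hj)
  have hMlip1 : ∀ k, M (k + 1) ≤ M k + 1 := by
    intro k
    refine hub (k + 1) (M k + 1) ?_ ?_ ?_
    · have := hc1 k; push_cast; omega
    · have := hc2 k; push_cast; omega
    · intro j hj
      have h1 := hc3 k j hj
      have h2 := (abs_shift (k : ℤ) (U j)).2
      push_cast
      omega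
  have hMlip2 : ∀ k, M k ≤ M (k + 1) + 1 := by
    intro k
    refine hub k (M (k + 1) + 1) ?_ ?_ ?_
    · have := hc1 (k + 1); push_cast at this; omega
    · have := hc2 (k + 1); push_cast at this; omega
    · intro j hj
      have h1 := hc3 (k + 1) j hj
      have h2 := (abs_shift (k : ℤ) (U j)).1
      push_cast at h1 ⊢
      omega
  have hM0 : M 0 = 0 := by
    apply le_antisymm
    · refine hub 0 0 (by simp) (by push_cast; omega) ?_
      intro j hj
      have h1 := hFa j hj
      have h2 : |(0 : ℤ) - U j| = (U j : ℤ) := by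
        rw [zero_sub, abs_neg, Int.abs_natCast]
      have h3 := neg_abs_le (F j)
      push_cast
      rw [h2]
      omega
    · have := hc1 0; simpa using this
  have hMu : M u = -s := by
    apply le_antisymm
    · refine hub u (-s) (by omega) (by omega) ?_
      intro j hj
      have h1 := hFb j hj
      have hnn : (0 : ℤ) ≤ (u : ℤ) - U j := by
        have := hUle j hj; omega
      rw [abs_of_nonneg hnn]
      have h2 := le_abs_self (s - F j)
      omega
    · have := hc2 u; simpa using this
  have hacc1 : ∀ j, j ≤ n → -F j - D' ≤ M (U j) := by
    intro j hj
    have := hc3 (U j) j hj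
    simpa using this
  have hacc2 : ∀ j, j ≤ n → M (U j) ≤ -F j + D' := by
    intro j hj
    refine hub (U j) (-F j + D') ?_ ?_ ?_
    · have h1 := hFa j hj
      have h2 := le_abs_self (F j)
      omega
    · have h1 := hFb j hj
      have h2 := neg_abs_le (s - F j)
      have h3 := hUle j hj
      omega
    · intro j' hj'
      have h1 := hFc j j' hj hj'
      have h2 := le_abs_self (F j - F j')
      have h3 := abs_nonneg ((U j : ℤ) - U j')
      omega
  -- the walk
  set T : ℕ → ℤ := fun k => M k + (if Even (M k + k) then 0 else 1) with hT
  have hTlo : ∀ k, M k ≤ T k := by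
    intro k; rw [hT]; dsimp only; split_ifs <;> omega
  have hThi : ∀ k, T k ≤ M k + 1 := by
    intro k; rw [hT]; dsimp only; split_ifs <;> omega
  have hTpar : ∀ k, Even (T k + k) := by
    intro k
    by_cases he : Even (M k + (k : ℤ))
    · have h : T k = M k := by rw [hT]; dsimp only; rw [if_pos he]; ring
      rw [h]; exact he
    · have h : T k = M k + 1 := by rw [hT]; dsimp only; rw [if_neg he]
      rw [h, show M k + 1 + (k : ℤ) = (M k + (k : ℤ)) + 1 by ring]
      exact (Int.even_add_one).mpr he
  refine ⟨T, ?_, ?_, ?_, ?_⟩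
  · rw [hT]; dsimp only; rw [hM0]; norm_num
  · intro k
    obtain ⟨m1, e1⟩ := hTpar k
    obtain ⟨m2, e2⟩ := hTpar (k + 1)
    have b1 := hMlip1 k
    have b2 := hMlip2 k
    have b3 := hTlo k
    have b4 := hThi k
    have b5 := hTlo (k + 1)
    have b6 := hThi (k + 1)
    push_cast at e2
    omega
  · rw [hT]; dsimp only; rw [hMu, if_pos]
    · ring
    · obtain ⟨m, hm⟩ := hpar
      exact ⟨m - s, by omega⟩
  · intro j hj
    have h1 := hacc1 j hj
    have h2 := hacc2 j hj
    have h3 := hTlo (U j)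
    have h4 := hThi (U j)
    rw [abs_le]
    omega

end GoodWalk

section BadWalk

lemma bad_walk (n u D' : ℕ) (s : ℤ) (F : ℕ → ℤ) (U : ℕ → ℕ)
    (hF0 : F 0 = 0) (hU0 : U 0 = 0) (hUn : U n = u) (hFn : F n = s)
    (hu : 6 * D' + 19 ≤ u)
    (hpar : Even ((u : ℤ) + s))
    (hsurj : ∀ k, k ≤ u → ∃ j, j ≤ n ∧ U j = k)
    (H : ∀ a b : ℕ, a ≤ b → b ≤ n → 2 * |F b - F a| ≤ ((U b : ℤ) - U a) + 2 * D') :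
    ∃ T : ℕ → ℤ, T 0 = 0 ∧ (∀ k, T (k + 1) = T k + 1 ∨ T (k + 1) = T k - 1) ∧
      T u = -s ∧ ∃ j, 1 ≤ j ∧ j ≤ n ∧ (D' : ℤ) + 4 ≤ |F j + T (U j)| := by
  have hs2 : 2 * |s| ≤ (u : ℤ) + 2 * D' := by
    have := H 0 n (by omega) (le_refl n)
    rw [hF0, hU0, hFn, hUn] at this
    simpa using this
  set a : ℕ := s.natAbs with hadef
  have haa : ((a : ℕ) : ℤ) = |s| := Int.natCast_natAbs s
  have hsa1 : s ≤ (a : ℤ) := by rw [haa]; exact le_abs_self s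
  have hsa2 : -s ≤ (a : ℤ) := by rw [haa]; exact neg_le_abs s
  have ha2 : 2 * (a : ℤ) ≤ (u : ℤ) + 2 * D' := by rw [haa]; exact hs2
  have hau : a ≤ u := by omega
  have heven : Even ((u : ℤ) - a) := by
    obtain ⟨m, hm⟩ := hpar
    rcases Int.natAbs_eq s with hcase | hcase
    · exact ⟨m - a, by rw [hadef] at *; omega⟩
    · exact ⟨m, by rw [hadef] at *; omega⟩
  obtain ⟨k, hk⟩ : ∃ k : ℕ, u - a = k + k := by
    rcases heven with ⟨t, ht⟩
    exact ⟨t.toNat, by omega⟩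
  have hkZ : 2 * (k : ℤ) = (u : ℤ) - a := by omega
  have hkd : D' + 5 ≤ k := by omega
  have hku : k < u := by omega
  obtain ⟨j0, hj0n, hj0U⟩ := hsurj k (by omega)
  have hj0pos : 1 ≤ j0 := by
    rcases Nat.eq_zero_or_pos j0 with h0 | h0
    · rw [h0, hU0] at hj0U; omega
    · exact h0
  obtain ⟨e, he, hviol⟩ : ∃ e : ℤ, (e = 1 ∨ e = -1) ∧
      (D' : ℤ) + 4 ≤ |F j0 + e * k| := by
    rcases le_or_gt 0 (F j0) with hf | hf
    · refine ⟨1, Or.inl rfl, ?_⟩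
      rw [one_mul, abs_of_nonneg (by omega)]
      omega
    · refine ⟨-1, Or.inr rfl, ?_⟩
      rw [neg_one_mul, abs_of_nonpos (by omega)]
      omega
  obtain ⟨t2, ht2⟩ : ∃ t2 : ℤ, (u : ℤ) - k + (e * k + s) = t2 + t2 := by
    obtain ⟨m, hm⟩ := hpar
    rcases he with rfl | rfl
    · exact ⟨m, by omega⟩
    · exact ⟨m - k, by omega⟩
  have ht2a : 0 ≤ t2 := by rcases he with rfl | rfl <;> omega
  have ht2b : t2 ≤ (u : ℤ) - k := by rcases he with rfl | rfl <;> omega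
  set T : ℕ → ℤ := fun m =>
    if m ≤ k then e * m
    else if (m : ℤ) - k ≤ t2 then e * k - ((m : ℤ) - k)
    else e * k - 2 * t2 + ((m : ℤ) - k) with hT
  have hTk : T k = e * k := by rw [hT]; dsimp only; rw [if_pos (le_refl k)]
  refine ⟨T, ?_, ?_, ?_, ⟨j0, hj0pos, hj0n, ?_⟩⟩
  · rw [hT]; dsimp only; rw [if_pos (Nat.zero_le k)]; simp
  · intro m
    rcases he with rfl | rfl <;>
      (rw [hT]; dsimp only; split_ifs <;> push_cast <;> omega)
  · rcases he with rfl | rfl <;>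
      (rw [hT]; dsimp only; rw [if_neg (by omega)]; split_ifs <;> omega)
  · rw [hj0U, hTk]
    exact hviol

end BadWalk

section MkTree

variable {n : ℕ}

/-- the full decision tree querying a given list of positions -/
def mkTree : List (Fin n) → (Finset (Fin n) → Bool) → DecTree n
  | [], g => DecTree.leaf (g ∅)
  | i :: l, g => DecTree.node i (mkTree l g) (mkTree l fun s => g (insert i s))

lemma mkTree_depth (l : List (Fin n)) (g : Finset (Fin n) → Bool) :
    (mkTree l g).depth ≤ l.length := by
  induction l generalizing g with
  | nil => simp [mkTree, DecTree.depth]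
  | cons i l ih =>
    rw [mkTree, DecTree.depth, List.length_cons]
    have h1 := ih g
    have h2 := ih (fun s => g (insert i s))
    omega

lemma mkTree_eval (l : List (Fin n)) (g : Finset (Fin n) → Bool) (A : Finset (Fin n)) :
    (mkTree l g).eval A = g (A.filter (· ∈ l)) := by
  induction l generalizing g with
  | nil =>
    have hset : A.filter (· ∈ ([] : List (Fin n))) = ∅ := by simp
    rw [hset, mkTree, DecTree.eval]
  | cons i l ih =>
    rw [mkTree, DecTree.eval]
    by_cases hi : i ∈ A
    · rw [if_pos hi, ih]
      have hset : insert i (A.filter (· ∈ l)) = A.filter (· ∈ i :: l) := by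
        ext x
        simp only [Finset.mem_insert, Finset.mem_filter, List.mem_cons]
        constructor
        · rintro (rfl | ⟨hx, hl⟩)
          exacts [⟨hi, Or.inl rfl⟩, ⟨hx, Or.inr hl⟩]
        · rintro ⟨hx, rfl | hl⟩
          exacts [Or.inl rfl, Or.inr ⟨hx, hl⟩]
      rw [hset]
    · rw [if_neg hi, ih]
      have hset : A.filter (· ∈ l) = A.filter (· ∈ i :: l) := by
        apply Finset.filter_congr
        intro x hx
        simp only [List.mem_cons]
        constructor
        · exact Or.inr
        · rintro (rfl | hl)
          exacts [absurd hx hi, hl]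
      rw [hset]

lemma exists_tree (g : Finset (Fin n) → Bool) (k : ℕ) :
    ∃ T : DecTree n, T.depth ≤ n ∧ Computes T (fun A : Slice n k => g A.val) := by
  refine ⟨mkTree Finset.univ.toList g, ?_, ?_⟩
  · have := mkTree_depth Finset.univ.toList g
    rwa [Finset.length_toList, Finset.card_univ, Fintype.card_fin] at this
  · intro A
    rw [mkTree_eval]
    congr 1
    apply Finset.filter_true_of_mem
    intro x _
    simp [Finset.mem_toList]

end MkTree

/-- If Signgiver has a strategy in the prefix-discrepancy game on `[n]` (`n`
even) guaranteeing at every time, for every interval `[i,j]`,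
`|disc(i,j)| - unq(i,j)/2 ≤ D'` (written `2·|disc| - unq ≤ 2·D'`; so the
modified game value satisfies `d'(n) ≤ D'`), then for `d = D' + 3` the function
`Disc-max-d` on the middle slice satisfies `E_{n/2}(Disc-max-d) ≤ 6d`, i.e. its
deterministic query complexity is at least `n - 6(D' + 3)`. -/
theorem stmt_16 (n D' : ℕ) (hn : Even n)
    (hσ : ∃ σ : SgStrategy n, ValidStrategy σ ∧
      ∀ qs : List (Fin n), qs.Nodup →
        ∀ i j : ℕ, i ≤ j → j < n →
          2 * |intervalDisc (playHist σ qs) i j| -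
              (intervalUnq (playHist σ qs) i j : ℤ) ≤ 2 * (D' : ℤ)) :
    n - Dquery n (n / 2) (fun A => discMaxFun n (D' + 3) A.val) ≤ 6 * (D' + 3) ∧
    n - 6 * (D' + 3) ≤ Dquery n (n / 2) (fun A => discMaxFun n (D' + 3) A.val) := by
  classical
  obtain ⟨σ, hσv, hσg⟩ := hσ
  have hSne : {d : ℕ | ∃ T : DecTree n, T.depth ≤ d ∧
      Computes T (fun A : Slice n (n / 2) => discMaxFun n (D' + 3) A.val)}.Nonempty := by
    obtain ⟨T, hT1, hT2⟩ := exists_tree (discMaxFun n (D' + 3)) (n / 2)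
    exact ⟨n, T, hT1, hT2⟩
  have hmain : ∀ x ∈ {d : ℕ | ∃ T : DecTree n, T.depth ≤ d ∧
      Computes T (fun A : Slice n (n / 2) => discMaxFun n (D' + 3) A.val)},
      n - 6 * (D' + 3) ≤ x := by
    rintro x ⟨T, hdep, hcomp⟩
    by_contra hx
    push_neg at hx
    rcases hwb : walk σ T [] with ⟨qs, b⟩
    have hqnd : qs.Nodup := by
      have := walk_nodup σ hσv T [] List.nodup_nil
      rwa [hwb] at this
    have hqlen : qs.length ≤ T.depth := by
      have := walk_length σ T []
      rw [hwb] at this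
      simpa using this
    have heval := walk_eval σ hσv T [] List.nodup_nil
    rw [hwb] at heval
    set h : List (Fin n × ℤ) := playHist σ qs with hh
    have htri : ∀ p, boardVal h p = 0 ∨ boardVal h p = 1 ∨ boardVal h p = -1 :=
      boardVal_tri σ hσv qs
    have H1 := H1conv h D' (hσg qs hqnd)
    -- lower bound on the number of free positions
    have hfree : (Finset.univ.filter fun p : Fin n => boardVal h p = 0) =
        (Finset.univ.filter fun p : Fin n => p ∉ qs) := by
      apply Finset.filter_congr
      intro p _
      constructor
      · intro hz hm
        exact boardVal_ne_zero_of_mem σ hσv hm hz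
      · intro hnm
        exact boardVal_eq_zero_of_not_mem σ hnm
    have hucard : n ≤ UU h n + qs.length := by
      have h0 : UU h n = (Finset.univ.filter fun p : Fin n => p ∉ qs).card := by
        unfold UU
        rw [filter_lt_n_eq, hfree]
      have h1 := Finset.card_filter_add_card_filter_not
        (s := (Finset.univ : Finset (Fin n))) (p := fun p => p ∈ qs)
      have h2 : (Finset.univ.filter fun p : Fin n => p ∈ qs).card ≤ qs.length := by
        calc (Finset.univ.filter fun p : Fin n => p ∈ qs).card
            ≤ qs.toFinset.card := by
              apply Finset.card_le_card
              intro p hp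
              rw [List.mem_toFinset]
              exact (Finset.mem_filter.mp hp).2
          _ ≤ qs.length := qs.toFinset_card_le
      rw [Finset.card_univ, Fintype.card_fin] at h1
      omega
    have hun : 6 * D' + 19 ≤ UU h n := by omega
    have hpar := parity_un h htri hn
    have hUle : ∀ j, j ≤ n → UU h j ≤ UU h n := fun j hj => UU_mono h hj
    have hsurj : ∀ k, k ≤ UU h n → ∃ j, j ≤ n ∧ UU h j = k := by
      intro k hk
      obtain ⟨j', hj', he⟩ := UU_surj h n (le_refl n) k hk
      exact ⟨j', hj', he⟩
    obtain ⟨Tg, hTg0, hTgstep, hTgu, hTgacc⟩ :=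
      good_walk n (UU h n) D' (prefixDisc h n) (prefixDisc h) (UU h)
        (prefixDisc_zero h) (UU_zero h) rfl rfl hUle (by omega) hpar H1
    obtain ⟨Tb, hTb0, hTbstep, hTbu, jb, hjb1, hjbn, hjbviol⟩ :=
      bad_walk n (UU h n) D' (prefixDisc h n) (prefixDisc h) (UU h)
        (prefixDisc_zero h) (UU_zero h) rfl rfl hun hpar hsurj H1
    have keyg := key h htri Tg hTg0 hTgstep
    have keyb := key h htri Tb hTb0 hTbstep
    -- cardinalities
    obtain ⟨m, hm⟩ := hn
    have hcardg : (AofT h Tg).card = n / 2 := by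
      have hkn := keyg n (le_refl n)
      rw [filter_lt_n_eq, hTgu] at hkn
      omega
    have hcardb : (AofT h Tb).card = n / 2 := by
      have hkn := keyb n (le_refl n)
      rw [filter_lt_n_eq, hTbu] at hkn
      omega
    -- the good set satisfies the property
    have hfg : DiscMaxProp n (D' + 3) (AofT h Tg) := by
      intro j hj
      rw [Finset.mem_Icc] at hj
      have hk := keyg j hj.2
      have hacc := hTgacc j hj.2
      have heq : 2 * (((AofT h Tg).filter fun i : Fin n => (i : ℕ) < j).card : ℤ) - j =
          prefixDisc h j + Tg (UU h j) := by omega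
      rw [heq]
      push_cast
      omega
    -- the bad set violates it
    have hfb : ¬ DiscMaxProp n (D' + 3) (AofT h Tb) := by
      intro hprop
      have h2 := hprop jb (Finset.mem_Icc.mpr ⟨hjb1, hjbn⟩)
      have hk := keyb jb hjbn
      have heq : 2 * (((AofT h Tb).filter fun i : Fin n => (i : ℕ) < jb).card : ℤ) - jb =
          prefixDisc h jb + Tb (UU h jb) := by omega
      rw [heq] at h2
      push_cast at h2
      omega
    -- consistency of both sets with the answers given
    have hApos : ∀ (T' : ℕ → ℤ) (p : Fin n), boardVal h p = 1 → p ∈ AofT h T' :=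
      fun T' p hp => Finset.mem_filter.mpr ⟨Finset.mem_univ p, Or.inl hp⟩
    have hAneg : ∀ (T' : ℕ → ℤ) (p : Fin n), boardVal h p = -1 → p ∉ AofT h T' := by
      intro T' p hp hmem
      rcases (Finset.mem_filter.mp hmem).2 with h1 | ⟨h0, -⟩
      · rw [hp] at h1; exact absurd h1 (by decide)
      · rw [hp] at h0; exact absurd h0 (by decide)
    have hevalg : T.eval (AofT h Tg) = b := heval _ (hApos Tg) (hAneg Tg)
    have hevalb : T.eval (AofT h Tb) = b := heval _ (hApos Tb) (hAneg Tb)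
    have hbt : b = true := by
      have h2 : b = discMaxFun n (D' + 3) (AofT h Tg) := by
        have h3 := hcomp ⟨AofT h Tg, hcardg⟩
        rw [hevalg] at h3
        exact h3
      rw [h2]
      simp only [discMaxFun]
      exact decide_eq_true hfg
    have hbf : b = false := by
      have h2 : b = discMaxFun n (D' + 3) (AofT h Tb) := by
        have h3 := hcomp ⟨AofT h Tb, hcardb⟩
        rw [hevalb] at h3
        exact h3
      rw [h2]
      simp only [discMaxFun]
      exact decide_eq_false hfb
    rw [hbt] at hbf
    exact absurd hbf (by decide)
  have hinf := le_csInf hSne hmain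
  unfold Dquery
  constructor <;> omega
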